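/- arXiv:1106.5239 — 4 statements merged into one kernel-verified Lean document; each statement's English description precedes it below -/
import Mathlib

section
/- If N is a prime quadratic module in a commutative unital ring R, then ind(N) = {A symmetric in M_n(R) : v^T A v ∈ N for all v ∈ R^n} is a prime quadratic module in M_n(R), and it is the unique prime quadratic module in M_n(R) whose intersection with R·I_n equals N·I_n. -/
open Matrix

/-- A quadratic module in `M_n(R)`. -/
def IsQM {n : ℕ} {R : Type*} [CommRing R] (M : Set (Matrix (Fin n) (Fin n) R)) : Prop :=
  (∀ A ∈ M, A.IsSymm) ∧ (1 : Matrix (Fin n) (Fin n) R) ∈ M ∧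
  (∀ a ∈ M, ∀ b ∈ M, a + b ∈ M) ∧
  ∀ (A : Matrix (Fin n) (Fin n) R), ∀ m ∈ M, Aᵀ * m * A ∈ M

/-- A prime quadratic module in `M_n(R)`. -/
def IsPrimeQM {n : ℕ} {R : Type*} [CommRing R] (M : Set (Matrix (Fin n) (Fin n) R)) : Prop :=
  IsQM M ∧ -(1 : Matrix (Fin n) (Fin n) R) ∉ M ∧
  ∀ (A : Matrix (Fin n) (Fin n) R) (r : R), A.IsSymm → r ^ 2 • A ∈ M →
    A ∈ M ∨ r • (1 : Matrix (Fin n) (Fin n) R) ∈ M ∩ (-M)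

/-- A quadratic module in a commutative ring `R`. -/
def IsQMR {R : Type*} [CommRing R] (M : Set R) : Prop :=
  1 ∈ M ∧ (∀ a ∈ M, ∀ b ∈ M, a + b ∈ M) ∧ ∀ r : R, ∀ m ∈ M, r ^ 2 * m ∈ M

/-- A prime quadratic module in `R`. -/
def IsPrimeQMR {R : Type*} [CommRing R] (N : Set R) : Prop :=
  IsQMR N ∧ (-1 : R) ∉ N ∧ ∀ a t : R, a * t ^ 2 ∈ N → a ∈ N ∨ t ∈ N ∩ (-N)

/-- `ind(N) = { A symmetric : vᵀ A v ∈ N for all v ∈ Rⁿ }`. -/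
def indN {R : Type*} [CommRing R] (n : ℕ) (N : Set R) : Set (Matrix (Fin n) (Fin n) R) :=
  {A | A.IsSymm ∧ ∀ v : Fin n → R, v ⬝ᵥ A.mulVec v ∈ N}

namespace Stmt13Aux

variable {n : ℕ} {R : Type*} [CommRing R]

private lemma conj_qf (A m : Matrix (Fin n) (Fin n) R) (v : Fin n → R) :
    v ⬝ᵥ (Aᵀ * m * A) *ᵥ v = (A *ᵥ v) ⬝ᵥ m *ᵥ (A *ᵥ v) := by
  rw [← Matrix.mulVec_mulVec, ← Matrix.mulVec_mulVec, Matrix.dotProduct_mulVec,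
    Matrix.vecMul_transpose]

private lemma conj_symm (A : Matrix (Fin n) (Fin n) R) {m : Matrix (Fin n) (Fin n) R}
    (hm : m.IsSymm) : (Aᵀ * m * A).IsSymm := by
  simp [Matrix.IsSymm, Matrix.transpose_mul, hm.eq, Matrix.mul_assoc]

private lemma conj_vmv (v e : Fin n → R) (A : Matrix (Fin n) (Fin n) R) :
    (vecMulVec v e)ᵀ * A * (vecMulVec v e) = (v ⬝ᵥ A *ᵥ v) • vecMulVec e e := by
  ext x y
  simp [Matrix.mul_apply, vecMulVec_apply, dotProduct, Matrix.mulVec, Finset.mul_sum,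
    Finset.sum_mul, transpose_apply]
  rw [Finset.sum_comm]
  apply Finset.sum_congr rfl; intro i _
  apply Finset.sum_congr rfl; intro j _
  ring

private lemma esum :
    ∑ i : Fin n, vecMulVec (Pi.single i (1:R)) (Pi.single i 1) = 1 := by
  ext x y
  simp [Matrix.sum_apply, vecMulVec_apply, Pi.single_apply, Matrix.one_apply]

private lemma vmv_mulVec (v w u : Fin n → R) :
    (vecMulVec v w) *ᵥ u = (w ⬝ᵥ u) • v := by
  ext x
  simp [Matrix.mulVec, vecMulVec_apply, dotProduct, Finset.mul_sum, Finset.sum_mul, mul_assoc]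
  exact Finset.sum_congr rfl fun j _ => by ring

private lemma qf_single (A : Matrix (Fin n) (Fin n) R) (i : Fin n) :
    (Pi.single i (1:R)) ⬝ᵥ A *ᵥ (Pi.single i 1) = A i i := by
  simp [Matrix.mulVec_single]

private lemma qf_add (A : Matrix (Fin n) (Fin n) R) (i j : Fin n) :
    (Pi.single i (1:R) + Pi.single j 1) ⬝ᵥ A *ᵥ (Pi.single i 1 + Pi.single j 1)
      = A i i + A i j + A j i + A j j := by
  simp [add_dotProduct, Matrix.mulVec_add, dotProduct_add, Matrix.mulVec_single]
  ring

private lemma qf_sub (A : Matrix (Fin n) (Fin n) R) (i j : Fin n) :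
    (Pi.single i (1:R) - Pi.single j 1) ⬝ᵥ A *ᵥ (Pi.single i 1 - Pi.single j 1)
      = A i i - A i j - A j i + A j j := by
  simp [sub_dotProduct, Matrix.mulVec_sub, dotProduct_sub, Matrix.mulVec_single]
  ring

private lemma bigid (A : Matrix (Fin n) (Fin n) R) :
    (∑ i : Fin n, ∑ j : Fin n,
      ((A i i + A i j + A j i + A j j) • vecMulVec (Pi.single i (1:R) + Pi.single j 1) (Pi.single i 1 + Pi.single j 1)
      + (A i i - A i j - A j i + A j j) • vecMulVec (Pi.single i (1:R) - Pi.single j 1) (Pi.single i 1 - Pi.single j 1)))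
      + ∑ i : Fin n, (-(4*((n:R)*A i i + ∑ k, A k k))) • vecMulVec (Pi.single i (1:R)) (Pi.single i 1)
      = (4:R) • A + (4:R) • Aᵀ := by
  ext x y
  simp only [Matrix.add_apply, Matrix.sum_apply, Matrix.smul_apply, vecMulVec_apply,
    Pi.add_apply, Pi.sub_apply, Pi.single_apply, smul_eq_mul, Matrix.transpose_apply]
  have key : ∀ i j : Fin n,
      ((A i i + A i j + A j i + A j j) * (((if x = i then (1:R) else 0) + if x = j then (1:R) else 0) * ((if y = i then (1:R) else 0) + if y = j then (1:R) else 0))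
      + (A i i - A i j - A j i + A j j) * (((if x = i then (1:R) else 0) - if x = j then (1:R) else 0) * ((if y = i then (1:R) else 0) - if y = j then (1:R) else 0)))
      = 2*(A i i + A j j)*((if x = i then (1:R) else 0)*(if y = i then (1:R) else 0))
        + 2*(A i i + A j j)*((if x = j then (1:R) else 0)*(if y = j then (1:R) else 0))
        + 2*(A i j + A j i)*((if x = i then (1:R) else 0)*(if y = j then (1:R) else 0))
        + 2*(A i j + A j i)*((if x = j then (1:R) else 0)*(if y = i then (1:R) else 0)) := by
    intro i j; ring
  rw [Finset.sum_congr rfl (fun i _ => Finset.sum_congr rfl (fun j _ => key i j))]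
  simp only [Finset.sum_add_distrib, mul_ite, ite_mul, mul_zero, zero_mul, mul_one, one_mul,
    Finset.sum_ite_eq, Finset.mem_univ, if_true]
  by_cases h : x = y
  · subst h
    simp [mul_add, Finset.sum_add_distrib, Finset.sum_const, Finset.card_univ, nsmul_eq_mul]
    simp only [← Finset.mul_sum]
    ring
  · simp [h, Ne.symm h]
    ring

section NLemmas

variable {N : Set R}

private lemma N0 (hN : IsQMR N) : (0:R) ∈ N := by
  simpa using hN.2.2 0 1 hN.1

private lemma Nsum (hN : IsQMR N) {ι : Type*} (s : Finset ι) (f : ι → R)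
    (h : ∀ i ∈ s, f i ∈ N) : ∑ i ∈ s, f i ∈ N := by
  classical
  refine Finset.sum_induction f (· ∈ N) (fun a b ha hb => hN.2.1 a ha b hb) (N0 hN) h

private lemma Nnat (hN : IsQMR N) (m : ℕ) {s : R} (h : s ∈ N) : (m:R) * s ∈ N := by
  induction m with
  | zero => simpa using N0 hN
  | succ k ih =>
      have := hN.2.1 _ ih _ h
      push_cast
      convert this using 1
      ring

private lemma smul_one_mem_ind (hN : IsQMR N) {r : R} (hr : r ∈ N) :
    r • (1 : Matrix (Fin n) (Fin n) R) ∈ indN n N := by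
  constructor
  · simp [Matrix.IsSymm]
  · intro v
    have h1 : (r • (1 : Matrix (Fin n) (Fin n) R)) *ᵥ v = r • v := by
      rw [Matrix.smul_mulVec, Matrix.one_mulVec]
    rw [h1]
    have : v ⬝ᵥ r • v = ∑ i, (v i)^2 * r := by
      simp [dotProduct]
      exact Finset.sum_congr rfl fun i _ => by ring
    rw [this]
    exact Nsum hN _ _ fun i _ => hN.2.2 (v i) r hr

private lemma neg_two (hN : IsPrimeQMR N) : (-2 : R) ∉ N := by
  intro h
  have := hN.1.2.1 1 hN.1.1 (-2) h
  norm_num at this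
  exact hN.2.1 this

private lemma neg_four (hN : IsPrimeQMR N) : (-4 : R) ∉ N := by
  intro h
  have h' : (-1 : R) * 2 ^ 2 ∈ N := by norm_num; exact h
  rcases hN.2.2 (-1) 2 h' with h1 | h2
  · exact hN.2.1 h1
  · exact neg_two hN h2.2

end NLemmas

section MLemmas

variable {N : Set R} {M : Set (Matrix (Fin n) (Fin n) R)}

private lemma M0 (hQ : IsQM M) : (0 : Matrix (Fin n) (Fin n) R) ∈ M := by
  simpa using hQ.2.2.2 0 1 hQ.2.1

private lemma Msum (hQ : IsQM M) {ι : Type*} (s : Finset ι) (f : ι → Matrix (Fin n) (Fin n) R)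
    (h : ∀ i ∈ s, f i ∈ M) : ∑ i ∈ s, f i ∈ M := by
  classical
  refine Finset.sum_induction f (· ∈ M) (fun a b ha hb => hQ.2.2.1 a ha b hb) (M0 hQ) h

private lemma rank1 [NeZero n] (hQ : IsQM M)
    (hmem : ∀ r : R, r • (1 : Matrix (Fin n) (Fin n) R) ∈ M ↔ r ∈ N)
    {r : R} (hr : r ∈ N) (w : Fin n → R) : r • vecMulVec w w ∈ M := by
  have h := hQ.2.2.2 (vecMulVec (Pi.single (0 : Fin n) (1:R)) w) (r • 1) ((hmem r).mpr hr)
  rwa [conj_vmv, show (Pi.single (0 : Fin n) (1:R)) ⬝ᵥ (r • (1 : Matrix (Fin n) (Fin n) R)) *ᵥ (Pi.single (0 : Fin n) (1:R)) = r by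
    rw [Matrix.smul_mulVec, Matrix.one_mulVec, dotProduct_smul]
    simp] at h

private lemma lemA [NeZero n] (hN : IsPrimeQMR N) (hPM : IsPrimeQM M)
    (hmem : ∀ r : R, r • (1 : Matrix (Fin n) (Fin n) R) ∈ M ↔ r ∈ N)
    {A : Matrix (Fin n) (Fin n) R} (hA : A ∈ indN n N)
    (hd : ∀ i, A i i ∈ N ∧ -(A i i) ∈ N) : A ∈ M := by
  have hQ := hPM.1
  have h8 : (8:R) • A ∈ M := by
    have hG : (∑ i : Fin n, ∑ j : Fin n,
      ((A i i + A i j + A j i + A j j) • vecMulVec (Pi.single i (1:R) + Pi.single j 1) (Pi.single i 1 + Pi.single j 1)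
      + (A i i - A i j - A j i + A j j) • vecMulVec (Pi.single i (1:R) - Pi.single j 1) (Pi.single i 1 - Pi.single j 1)))
      + ∑ i : Fin n, (-(4*((n:R)*A i i + ∑ k, A k k))) • vecMulVec (Pi.single i (1:R)) (Pi.single i 1) ∈ M := by
      apply hQ.2.2.1
      · apply Msum hQ
        intro i _
        apply Msum hQ
        intro j _
        apply hQ.2.2.1
        · exact rank1 hQ hmem (by rw [← qf_add A i j]; exact hA.2 _) _
        · exact rank1 hQ hmem (by rw [← qf_sub A i j]; exact hA.2 _) _
      · apply Msum hQ
        intro i _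
        apply rank1 hQ hmem
        have hx : -((n:R)*A i i + ∑ k, A k k) ∈ N := by
          have h1 : (n:R) * (-(A i i)) ∈ N := Nnat hN.1 n (hd i).2
          have h2 : ∑ k, -(A k k) ∈ N := Nsum hN.1 _ _ fun k _ => (hd k).2
          have := hN.1.2.1 _ h1 _ h2
          convert this using 1
          rw [neg_add, Finset.sum_neg_distrib]
          ring
        have : -(4*((n:R)*A i i + ∑ k, A k k)) = (2:R)^2 * (-((n:R)*A i i + ∑ k, A k k)) := by ring
        rw [this]
        exact hN.1.2.2 2 _ hx
    rw [bigid, hA.1.eq, ← add_smul] at hG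
    norm_num at hG
    exact hG
  have h16 : (4:R) ^ 2 • A ∈ M := by
    have : (4:R) ^ 2 • A = (8:R) • A + (8:R) • A := by rw [← add_smul]; norm_num
    rw [this]
    exact hQ.2.2.1 _ h8 _ h8
  rcases hPM.2.2 A 4 hA.1 h16 with h | h
  · exact h
  · exfalso
    apply neg_four hN
    have : -((4:R) • (1 : Matrix (Fin n) (Fin n) R)) ∈ M := Set.mem_neg.mp h.2
    rw [← neg_smul] at this
    exact (hmem _).mp this

private lemma keyInduction [NeZero n] (hN : IsPrimeQMR N) (hPM : IsPrimeQM M)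
    (hmem : ∀ r : R, r • (1 : Matrix (Fin n) (Fin n) R) ∈ M ↔ r ∈ N) :
    ∀ (s : Finset (Fin n)) (A : Matrix (Fin n) (Fin n) R), A ∈ indN n N →
      (∀ i, i ∉ s → ∀ j, A i j = 0 ∧ A j i = 0) → A ∈ M := by
  classical
  have hQ := hPM.1
  intro s
  induction s using Finset.strongInduction with
  | _ s ih =>
    intro A hA hz
    by_cases hd : ∀ i, A i i ∈ N ∧ -(A i i) ∈ N
    · exact lemA hN hPM hmem hA hd
    · push_neg at hd
      obtain ⟨i, hi⟩ := hd
      have his : i ∈ s := by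
        by_contra hns
        have h0 : A i i = 0 := (hz i hns i).1
        rw [h0] at hi
        exact hi (N0 hN.1) (by simpa using N0 hN.1)
      have hsymm : ∀ x y, A x y = A y x := fun x y => Matrix.IsSymm.apply hA.1 y x
      have hcA : ∀ u : Fin n → R, u ⬝ᵥ (A *ᵥ Pi.single i 1) = A i ⬝ᵥ u := by
        intro u
        simp only [Matrix.mulVec_single, dotProduct, mul_one]
        exact Finset.sum_congr rfl fun j _ => by simp only [Matrix.col_apply, MulOpposite.smul_eq_mul_unop, Pi.smul_apply, MulOpposite.unop_op, mul_one]; rw [hsymm j i]; ring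
      have hAc : ∀ u : Fin n → R, (Pi.single i (1:R)) ⬝ᵥ (A *ᵥ u) = A i ⬝ᵥ u := by
        intro u
        simp only [dotProduct, Matrix.mulVec, Pi.single_apply, ite_mul, one_mul, zero_mul,
          Finset.sum_ite_eq, Finset.sum_ite_eq', Finset.mem_univ, if_true]
      have hBsymm : (A i i • (A i i • A - vecMulVec (A i) (A i))).IsSymm := by
        show _ᵀ = _
        ext x y
        simp only [Matrix.transpose_apply, Matrix.smul_apply, Matrix.sub_apply,
          vecMulVec_apply, smul_eq_mul]
        rw [hsymm y x]; ring
      have hBind : (A i i • (A i i • A - vecMulVec (A i) (A i))) ∈ indN n N := by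
        refine ⟨hBsymm, fun u => ?_⟩
        set w : Fin n → R := A i i • u - (A i ⬝ᵥ u) • (Pi.single i 1 : Fin n → R) with hw
        have hqB : u ⬝ᵥ (A i i • (A i i • A - vecMulVec (A i) (A i))) *ᵥ u
            = w ⬝ᵥ A *ᵥ w := by
          rw [hw]
          simp only [Matrix.smul_mulVec, Matrix.sub_mulVec, Matrix.mulVec_sub,
            Matrix.mulVec_smul, vmv_mulVec, dotProduct_smul, smul_dotProduct, dotProduct_sub,
            sub_dotProduct, smul_eq_mul]
          rw [qf_single, hcA u, hAc u, dotProduct_comm u (A i)]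
          ring
        rw [hqB]
        exact hA.2 w
      have hz' : ∀ x, x ∉ s.erase i → ∀ j,
          (A i i • (A i i • A - vecMulVec (A i) (A i))) x j = 0 ∧
          (A i i • (A i i • A - vecMulVec (A i) (A i))) j x = 0 := by
        intro x hx j
        rw [Finset.mem_erase] at hx
        push_neg at hx
        by_cases hxi : x = i
        · constructor
          · simp only [Matrix.smul_apply, Matrix.sub_apply, vecMulVec_apply, smul_eq_mul, hxi]
            ring
          · simp only [Matrix.smul_apply, Matrix.sub_apply, vecMulVec_apply, smul_eq_mul, hxi]
            rw [hsymm j i]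
            ring
        · have hxs := hz x (hx hxi)
          constructor
          · simp only [Matrix.smul_apply, Matrix.sub_apply, vecMulVec_apply, smul_eq_mul]
            rw [(hxs j).1, hsymm i x, (hxs i).1]
            ring
          · simp only [Matrix.smul_apply, Matrix.sub_apply, vecMulVec_apply, smul_eq_mul]
            rw [(hxs j).2, hsymm i x, (hxs i).1]
            ring
      have hB : (A i i • (A i i • A - vecMulVec (A i) (A i))) ∈ M :=
        ih (s.erase i) (Finset.erase_ssubset his) _ hBind hz'
      have ha : A i i ∈ N := by rw [← qf_single A i]; exact hA.2 _
      have hkey : (A i i) ^ 2 • A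
          = (A i i • (A i i • A - vecMulVec (A i) (A i))) + A i i • vecMulVec (A i) (A i) := by
        rw [smul_sub, smul_smul, ← pow_two, sub_add_cancel]
      have hmemM : (A i i) ^ 2 • A ∈ M := by
        rw [hkey]
        exact hQ.2.2.1 _ hB _ (rank1 hQ hmem ha (A i))
      rcases hPM.2.2 A (A i i) hA.1 hmemM with h | h
      · exact h
      · exfalso
        refine hi ((hmem _).mp h.1) ?_
        have hneg : -((A i i) • (1 : Matrix (Fin n) (Fin n) R)) ∈ M := Set.mem_neg.mp h.2
        rw [← neg_smul] at hneg
        exact (hmem _).mp hneg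

end MLemmas

end Stmt13Aux

theorem stmt13 {n : ℕ} [NeZero n] {R : Type*} [CommRing R] (N : Set R) (hN : IsPrimeQMR N) :
    IsPrimeQM (indN n N) ∧
      (indN n N) ∩ (Set.range fun r : R => r • (1 : Matrix (Fin n) (Fin n) R)) =
        (fun r : R => r • (1 : Matrix (Fin n) (Fin n) R)) '' N ∧
      ∀ M : Set (Matrix (Fin n) (Fin n) R), IsPrimeQM M →
        M ∩ (Set.range fun r : R => r • (1 : Matrix (Fin n) (Fin n) R)) =
          (fun r : R => r • (1 : Matrix (Fin n) (Fin n) R)) '' N →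
        M = indN n N := by
  classical
  refine ⟨⟨?_, ?_, ?_⟩, ?_, ?_⟩
  · -- IsQM (indN n N)
    refine ⟨fun A hA => hA.1, ?_, ?_, ?_⟩
    · have := Stmt13Aux.smul_one_mem_ind (n := n) hN.1 hN.1.1
      simpa using this
    · rintro a ⟨ha1, ha2⟩ b ⟨hb1, hb2⟩
      refine ⟨ha1.add hb1, fun v => ?_⟩
      rw [Matrix.add_mulVec, dotProduct_add]
      exact hN.1.2.1 _ (ha2 v) _ (hb2 v)
    · rintro A m ⟨hm1, hm2⟩
      exact ⟨Stmt13Aux.conj_symm A hm1, fun v => by rw [Stmt13Aux.conj_qf]; exact hm2 _⟩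
  · -- -1 ∉ indN n N
    rintro ⟨_, h2⟩
    have h := h2 (Pi.single 0 1)
    rw [show (-(1 : Matrix (Fin n) (Fin n) R)) *ᵥ (Pi.single 0 1) = -(Pi.single 0 1 : Fin n → R) by
      rw [Matrix.neg_mulVec, Matrix.one_mulVec], dotProduct_neg] at h
    apply hN.2.1
    simpa [dotProduct, Pi.single_apply] using h
  · -- primeness of indN n N
    intro A r hs h
    by_cases hA : A ∈ indN n N
    · exact Or.inl hA
    · right
      have hv : ∃ v, v ⬝ᵥ A *ᵥ v ∉ N := by
        by_contra hc; push_neg at hc; exact hA ⟨hs, hc⟩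
      obtain ⟨v, hv⟩ := hv
      have hq := h.2 v
      rw [Matrix.smul_mulVec, dotProduct_smul, smul_eq_mul] at hq
      have hq' : (v ⬝ᵥ A *ᵥ v) * r ^ 2 ∈ N := by rwa [mul_comm]
      rcases hN.2.2 _ r hq' with h1 | h2
      · exact absurd h1 hv
      · constructor
        · exact Stmt13Aux.smul_one_mem_ind hN.1 h2.1
        · rw [Set.mem_neg, ← neg_smul]
          exact Stmt13Aux.smul_one_mem_ind hN.1 (Set.mem_neg.mp h2.2)
  · -- intersection description
    ext B
    constructor
    · rintro ⟨hB, r, rfl⟩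
      refine ⟨r, ?_, rfl⟩
      have h := hB.2 (Pi.single 0 1)
      rw [Matrix.smul_mulVec, Matrix.one_mulVec, dotProduct_smul, smul_eq_mul] at h
      simpa [dotProduct, Pi.single_apply] using h
    · rintro ⟨r, hr, rfl⟩
      exact ⟨Stmt13Aux.smul_one_mem_ind hN.1 hr, r, rfl⟩
  · -- uniqueness
    intro M hPM hcap
    have hmem : ∀ r : R, r • (1 : Matrix (Fin n) (Fin n) R) ∈ M ↔ r ∈ N := by
      intro r
      constructor
      · intro h
        have hm : r • (1 : Matrix (Fin n) (Fin n) R)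
            ∈ (fun r : R => r • (1 : Matrix (Fin n) (Fin n) R)) '' N := by
          rw [← hcap]; exact ⟨h, r, rfl⟩
        obtain ⟨s, hs, heq⟩ := hm
        have hsr : s = r := by
          have h0 := congrFun (congrFun heq (0 : Fin n)) 0
          simpa [Matrix.one_apply] using h0
        rwa [← hsr]
      · intro h
        have hm : r • (1 : Matrix (Fin n) (Fin n) R)
            ∈ M ∩ (Set.range fun r : R => r • (1 : Matrix (Fin n) (Fin n) R)) := by
          rw [hcap]; exact ⟨r, h, rfl⟩
        exact hm.1
    apply Set.Subset.antisymm
    · -- M ⊆ indN n N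
      intro A hA
      refine ⟨hPM.1.1 A hA, fun v => ?_⟩
      have hsum : ∑ i : Fin n, (vecMulVec v (Pi.single i 1))ᵀ * A * (vecMulVec v (Pi.single i 1)) ∈ M :=
        Stmt13Aux.Msum hPM.1 _ _ (fun i _ => hPM.1.2.2.2 _ A hA)
      have heq : ∑ i : Fin n, (vecMulVec v (Pi.single i 1))ᵀ * A * (vecMulVec v (Pi.single i 1))
          = (v ⬝ᵥ A *ᵥ v) • (1 : Matrix (Fin n) (Fin n) R) := by
        rw [Finset.sum_congr rfl fun i _ => Stmt13Aux.conj_vmv v (Pi.single i 1) A]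
        rw [← Finset.smul_sum, Stmt13Aux.esum]
      rw [heq] at hsum
      exact (hmem _).mp hsum
    · -- indN n N ⊆ M
      intro A hA
      exact Stmt13Aux.keyInduction hN hPM hmem Finset.univ A hA
        (fun i hi _ => absurd (Finset.mem_univ i) hi)
end

section
/- For every prime quadratic module N in a commutative unital ring R, ind(N) = {A symmetric : there exists t ∈ R \ supp N with A t² ∈ N^n}, where N^n = {Σ n_i A_i^T A_i : n_i ∈ N, A_i ∈ M_n(R)}. -/
open Matrix

/-- `N^n = { Σᵢ nᵢ Aᵢᵀ Aᵢ : nᵢ ∈ N, Aᵢ ∈ M_n(R) }`. -/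
def Npow {R : Type*} [CommRing R] (n : ℕ) (N : Set R) : Set (Matrix (Fin n) (Fin n) R) :=
  {A | ∃ (k : ℕ) (c : Fin k → R) (B : Fin k → Matrix (Fin n) (Fin n) R),
    (∀ i, c i ∈ N) ∧ A = ∑ i, c i • ((B i)ᵀ * B i)}

section
variable {R : Type*} [CommRing R] {N : Set R}

lemma qm_zero (h : IsQMR N) : (0:R) ∈ N := by
  have := h.2.2 0 1 h.1; simpa using this

lemma qm_sum (h : IsQMR N) {ι : Type*} (s : Finset ι) (f : ι → R)
    (hf : ∀ i ∈ s, f i ∈ N) : ∑ i ∈ s, f i ∈ N := by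
  classical
  induction s using Finset.induction_on with
  | empty => simpa using qm_zero h
  | insert _ _ hx ih =>
    rw [Finset.sum_insert hx]
    exact h.2.1 _ (hf _ (Finset.mem_insert_self _ _)) _
      (ih fun i hi => hf i (Finset.mem_insert_of_mem hi))

lemma qm_sq_smul (h : IsQMR N) (r : R) {m : R} (hm : m ∈ N) : r^2 * m ∈ N := h.2.2 r m hm

lemma supp_prime (hN : IsPrimeQMR N) {x t : R} (h : x * t^2 ∈ N ∩ (-N)) :
    x ∈ N ∩ (-N) ∨ t ∈ N ∩ (-N) := by
  rcases hN.2.2 x t h.1 with h1 | h1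
  · rcases hN.2.2 (-x) t (by simpa using Set.mem_neg.mp h.2) with h2 | h2
    · exact Or.inl ⟨h1, by simpa using h2⟩
    · exact Or.inr h2
  · exact Or.inr h1

lemma one_not_supp (hN : IsPrimeQMR N) : (1:R) ∉ N ∩ (-N) := by
  intro h
  exact hN.2.1 (by simpa using h.2)

lemma two_not_supp (hN : IsPrimeQMR N) : (2:R) ∉ N ∩ (-N) := by
  intro h
  have h2 : (-2 : R) ∈ N := by simpa using h.2
  have := hN.1.2.1 _ h2 _ hN.1.1
  norm_num at this
  exact hN.2.1 this
end
section
variable {R : Type*} [CommRing R] {N : Set R} {n : ℕ}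

lemma mem_Npow_of {ι : Type*} [Fintype ι] {A : Matrix (Fin n) (Fin n) R}
    (c : ι → R) (B : ι → Matrix (Fin n) (Fin n) R)
    (hc : ∀ i, c i ∈ N) (hA : A = ∑ i, c i • ((B i)ᵀ * B i)) : A ∈ Npow n N := by
  classical
  refine ⟨Fintype.card ι, c ∘ (Fintype.equivFin ι).symm, B ∘ (Fintype.equivFin ι).symm,
    fun i => hc _, ?_⟩
  rw [hA]
  exact Fintype.sum_equiv (Fintype.equivFin ι) _ _ (fun i => by
    simp only [Function.comp_apply, Equiv.symm_apply_apply])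

lemma Npow_add {A B : Matrix (Fin n) (Fin n) R} (hA : A ∈ Npow n N) (hB : B ∈ Npow n N) :
    A + B ∈ Npow n N := by
  obtain ⟨k1, c1, B1, hc1, h1⟩ := hA
  obtain ⟨k2, c2, B2, hc2, h2⟩ := hB
  exact mem_Npow_of (Sum.elim c1 c2) (Sum.elim B1 B2)
    (fun i => by cases i <;> simp [hc1, hc2])
    (by rw [h1, h2, Fintype.sum_sum_type]; simp)

lemma Npow_sq_smul (hN : IsQMR N) (r : R) {A : Matrix (Fin n) (Fin n) R}
    (hA : A ∈ Npow n N) : r^2 • A ∈ Npow n N := by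
  obtain ⟨k, c, B, hc, h⟩ := hA
  refine mem_Npow_of (fun i => r^2 * c i) B (fun i => hN.2.2 r _ (hc i)) ?_
  rw [h, Finset.smul_sum]
  exact Finset.sum_congr rfl fun i _ => by rw [mul_smul]

lemma Npow_submatrix {A : Matrix (Fin n) (Fin n) R} (e : Fin n ≃ Fin n)
    (hA : A ∈ Npow n N) : A.submatrix e e ∈ Npow n N := by
  obtain ⟨k, c, B, hc, h⟩ := hA
  refine mem_Npow_of c (fun i => (B i).submatrix (Equiv.refl _) e) hc ?_
  subst h
  ext i j
  simp [Matrix.submatrix, Matrix.sum_apply, Matrix.mul_apply]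

/-- rank-one matrices with coefficient in N -/
lemma Npow_outer (hN : IsQMR N) {a : R} (ha : a ∈ N) (v : Fin n → R) :
    a • Matrix.of (fun i j => v i * v j) ∈ Npow n N := by
  classical
  refine mem_Npow_of (fun _ : Fin 1 => a)
    (fun _ => Matrix.of fun k l => if k.val = 0 then v l else 0) (fun _ => ha) ?_
  ext i j
  have hn : 0 < n := i.pos
  simp only [Fin.sum_univ_one, Matrix.smul_apply, Matrix.mul_apply, Matrix.transpose_apply,
    Matrix.of_apply]
  have : ∀ k : Fin n, (if k.val = 0 then v i else 0) * (if k.val = 0 then v j else 0)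
      = if k = ⟨0, hn⟩ then v i * v j else 0 := by
    intro k
    by_cases hk : k = ⟨0, hn⟩ <;> simp [hk, Fin.ext_iff]
    · intro h; exact absurd (Fin.ext h) hk
  rw [Finset.sum_congr rfl fun k _ => this k, Finset.sum_ite_eq' Finset.univ]
  simp
end
section
variable {R : Type*} [CommRing R] {m : ℕ}

/-- pad a matrix with a zero first row and column -/
def padM (M : Matrix (Fin m) (Fin m) R) : Matrix (Fin (m+1)) (Fin (m+1)) R :=
  Matrix.of (Fin.cons 0 (fun i => Fin.cons 0 (M i)))

@[simp] lemma padM_zero_row (M : Matrix (Fin m) (Fin m) R) (j) : padM M 0 j = 0 := by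
  simp [padM]
@[simp] lemma padM_zero_col (M : Matrix (Fin m) (Fin m) R) (i) : padM M i 0 = 0 := by
  induction i using Fin.cases <;> simp [padM]
@[simp] lemma padM_succ_succ (M : Matrix (Fin m) (Fin m) R) (i j) :
    padM M i.succ j.succ = M i j := by simp [padM]

lemma padM_mul (M : Matrix (Fin m) (Fin m) R) :
    (padM M)ᵀ * padM M = padM (Mᵀ * M) := by
  ext i j
  have key : ∀ i j : Fin (m+1), ((padM M)ᵀ * padM M) i j
      = ∑ k : Fin m, padM M k.succ i * padM M k.succ j := by
    intro i j
    rw [Matrix.mul_apply]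
    rw [Fin.sum_univ_succ]
    simp
  induction i using Fin.cases with
  | zero => rw [key]; simp
  | succ i =>
    induction j using Fin.cases with
    | zero => rw [key]; simp
    | succ j => rw [key]; simp [Matrix.mul_apply]

lemma padM_smul (r : R) (M : Matrix (Fin m) (Fin m) R) : padM (r • M) = r • padM M := by
  ext i j
  induction i using Fin.cases with
  | zero => simp
  | succ i => induction j using Fin.cases <;> simp

lemma padM_sum {ι : Type*} (s : Finset ι) (f : ι → Matrix (Fin m) (Fin m) R) :
    padM (∑ i ∈ s, f i) = ∑ i ∈ s, padM (f i) := by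
  ext i j
  rw [Matrix.sum_apply]
  induction i using Fin.cases with
  | zero => simp [Matrix.sum_apply]
  | succ i =>
    induction j using Fin.cases with
    | zero => simp [Matrix.sum_apply]
    | succ j => simp [Matrix.sum_apply]

lemma padM_eq_self {B : Matrix (Fin (m+1)) (Fin (m+1)) R}
    (h0r : ∀ j, B 0 j = 0) (h0c : ∀ i, B i 0 = 0) :
    padM (B.submatrix Fin.succ Fin.succ) = B := by
  ext i j
  induction i using Fin.cases with
  | zero => simp [h0r]
  | succ i =>
    induction j using Fin.cases with
    | zero => simp [h0c]
    | succ j => simp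
end
section
variable {R : Type*} [CommRing R] {N : Set R} {m : ℕ}

lemma pivot_identity (A : Matrix (Fin (m+1)) (Fin (m+1)) R) (hsym : A.IsSymm)
    (v : Fin (m+1) → R) (a : R) (haA : a = A 0 0)
    (u : Fin (m+1) → R)
    (hu : u = a • v - ((fun j => A 0 j) ⬝ᵥ v) • (Pi.single 0 1 : Fin (m+1) → R)) :
    v ⬝ᵥ ((a^2 • A) - a • Matrix.of (fun i j => A 0 i * A 0 j)).mulVec v
      = u ⬝ᵥ A.mulVec u := by
  set c : Fin (m+1) → R := fun j => A 0 j with hc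
  set d : R := c ⬝ᵥ v with hd
  have hCv : v ⬝ᵥ (Matrix.of (fun i j => c i * c j)).mulVec v = (v ⬝ᵥ c) * (c ⬝ᵥ v) := by
    simp only [dotProduct, mulVec, Matrix.of_apply, Finset.sum_mul, Finset.mul_sum]
    exact Finset.sum_congr rfl fun i _ => Finset.sum_congr rfl fun j _ => by ring
  have hvc : v ⬝ᵥ c = d := dotProduct_comm v c
  have hAe : A.mulVec (Pi.single 0 1) = fun i => A i 0 * 1 := mulVec_single A 0 1
  have hvAe : v ⬝ᵥ A.mulVec (Pi.single 0 1) = d := by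
    rw [hAe, hd, hc, dotProduct, dotProduct]
    exact Finset.sum_congr rfl fun i _ => by rw [hsym.apply]; ring
  have heAv : Pi.single (0 : Fin (m+1)) (1:R) ⬝ᵥ A.mulVec v = d := by
    rw [single_dotProduct, one_mul]
    rfl
  have h00 : Pi.single (0 : Fin (m+1)) (1:R) ⬝ᵥ A.mulVec (Pi.single 0 1) = A 0 0 := by
    rw [single_dotProduct, hAe]; simp
  simp only [hu, sub_mulVec, smul_mulVec, mulVec_sub, mulVec_smul, dotProduct_sub,
    sub_dotProduct, dotProduct_smul, smul_dotProduct]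
  rw [hCv, hvc, hvAe, heAv, h00, ← haA]
  simp only [smul_eq_mul]
  ring
end

section
variable {R : Type*} [CommRing R] {N : Set R}

lemma pivot (hN : IsPrimeQMR N) {m : ℕ}
    (IH : ∀ A : Matrix (Fin m) (Fin m) R, A.IsSymm →
      (∀ v, v ⬝ᵥ A.mulVec v ∈ N) → ∃ t, t ∉ N ∩ (-N) ∧ t^2 • A ∈ Npow m N)
    (A : Matrix (Fin (m+1)) (Fin (m+1)) R) (hsym : A.IsSymm)
    (hind : ∀ v, v ⬝ᵥ A.mulVec v ∈ N) (ha : A 0 0 ∉ N ∩ (-N)) :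
    ∃ t, t ∉ N ∩ (-N) ∧ t^2 • A ∈ Npow (m+1) N := by
  set a := A 0 0 with haA
  have haN : a ∈ N := by
    have := hind (Pi.single 0 1)
    simpa [single_dotProduct, mulVec_single] using this
  set C : Matrix (Fin (m+1)) (Fin (m+1)) R := Matrix.of (fun i j => A 0 i * A 0 j) with hCdef
  set B := a^2 • A - a • C with hBdef
  have hBsym : B.IsSymm := by
    rw [Matrix.IsSymm]
    ext i j
    simp only [hBdef, hCdef, Matrix.transpose_apply, Matrix.sub_apply, Matrix.smul_apply,
      Matrix.of_apply, smul_eq_mul]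
    rw [hsym.apply i j]
    ring
  have hBind : ∀ v, v ⬝ᵥ B.mulVec v ∈ N := fun v => by
    rw [hBdef, hCdef, pivot_identity A hsym v a haA _ rfl]
    exact hind _
  have hB0r : ∀ j, B 0 j = 0 := fun j => by
    simp only [hBdef, hCdef, Matrix.sub_apply, Matrix.smul_apply, Matrix.of_apply, smul_eq_mul,
      ← haA]
    ring
  have hB0c : ∀ i, B i 0 = 0 := fun i => by
    simp only [hBdef, hCdef, Matrix.sub_apply, Matrix.smul_apply, Matrix.of_apply, smul_eq_mul]
    rw [hsym.apply i 0, ← haA]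
    ring
  set B' := B.submatrix Fin.succ Fin.succ with hB'def
  have hB'sym : B'.IsSymm := hBsym.submatrix _
  have hB'ind : ∀ w, w ⬝ᵥ B'.mulVec w ∈ N := fun w => by
    have key : w ⬝ᵥ B'.mulVec w = (Fin.cons 0 w) ⬝ᵥ B.mulVec (Fin.cons 0 w) := by
      rw [dotProduct, dotProduct, Fin.sum_univ_succ]
      simp only [Fin.cons_zero, zero_mul, zero_add, Fin.cons_succ]
      refine Finset.sum_congr rfl fun i _ => ?_
      congr 1
      rw [mulVec, mulVec, dotProduct, dotProduct, Fin.sum_univ_succ]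
      simp [hB'def]
    rw [key]; exact hBind _
  obtain ⟨s, hs, hsB'⟩ := IH B' hB'sym hB'ind
  refine ⟨s * a^2, ?_, ?_⟩
  · intro h
    rcases supp_prime hN h with h' | h'
    exacts [hs h', ha h']
  · have hsB : s^2 • B ∈ Npow (m+1) N := by
      obtain ⟨k, cs, Bs, hcs, hrep⟩ := hsB'
      refine mem_Npow_of cs (fun i => padM (Bs i)) hcs ?_
      have h1 : s^2 • B = padM (s^2 • B') := by
        rw [padM_smul, padM_eq_self hB0r hB0c]
      rw [h1, hrep, padM_sum]
      refine Finset.sum_congr rfl fun i _ => ?_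
      rw [padM_smul, padM_mul]
    have key : (s*a^2)^2 • A = a^2 • (s^2 • B) + ((s*a)^2 * a) • C := by
      ext i j
      simp only [hBdef, hCdef, Matrix.add_apply, Matrix.smul_apply, Matrix.sub_apply,
        Matrix.of_apply, smul_eq_mul]
      ring
    rw [key]
    exact Npow_add (Npow_sq_smul hN.1 a hsB)
      (Npow_outer hN.1 (hN.1.2.2 (s*a) a haN) (fun j => A 0 j))
end

section
variable {R : Type*} [CommRing R] {N : Set R} {n : ℕ}

lemma Npow_zero : (0 : Matrix (Fin n) (Fin n) R) ∈ Npow n N :=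
  ⟨0, Fin.elim0, Fin.elim0, fun i => i.elim0, by simp⟩

lemma Npow_sum {ι : Type*} (s : Finset ι) (f : ι → Matrix (Fin n) (Fin n) R)
    (hf : ∀ i ∈ s, f i ∈ Npow n N) : ∑ i ∈ s, f i ∈ Npow n N := by
  classical
  induction s using Finset.induction_on with
  | empty => simpa using Npow_zero
  | insert _ _ hx ih =>
    rw [Finset.sum_insert hx]
    exact Npow_add (hf _ (Finset.mem_insert_self _ _))
      (ih fun i hi => hf i (Finset.mem_insert_of_mem hi))

lemma quad_eval (A : Matrix (Fin n) (Fin n) R) (i j : Fin n) (x y : R) :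
    (Pi.single i x + Pi.single j y) ⬝ᵥ A.mulVec (Pi.single i x + Pi.single j y)
      = x * (A i i * x + A i j * y) + y * (A j i * x + A j j * y) := by
  rw [mulVec_add, mulVec_single, mulVec_single, add_dotProduct, dotProduct_add,
    dotProduct_add, single_dotProduct, single_dotProduct, single_dotProduct,
    single_dotProduct]
  simp only [Pi.smul_apply, MulOpposite.smul_eq_mul_unop, MulOpposite.unop_op, col_apply]
  ring

lemma entries_supp (hN : IsPrimeQMR N) (A : Matrix (Fin n) (Fin n) R) (hsym : A.IsSymm)
    (hind : ∀ v, v ⬝ᵥ A.mulVec v ∈ N) (hdiag : ∀ i, A i i ∈ N ∩ (-N)) :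
    ∀ i j, A i j ∈ N ∩ (-N) := by
  intro i j
  have hji : A j i = A i j := (hsym.apply j i).symm
  have key : ∀ y : R, y^2 = 1 → A i j ^ 2 * A i i + (2 * A i j ^ 2) * y + A j j ∈ N := by
    intro y hy
    have h := hind (Pi.single i (A i j) + Pi.single j y)
    rw [quad_eval] at h
    have e : A i j * (A i i * A i j + A i j * y) + y * (A j i * A i j + A j j * y)
        = A i j ^ 2 * A i i + (2 * A i j ^ 2) * y + A j j * y^2 := by rw [hji]; ring
    rw [e, hy, mul_one] at h
    exact h
  have hNii : -(A i j ^ 2 * A i i) ∈ N := by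
    have : A i j ^ 2 * (-(A i i)) ∈ N := qm_sq_smul hN.1 _ (by simpa using (hdiag i).2)
    simpa [mul_neg] using this
  have hNjj : -(A j j) ∈ N := by simpa using (hdiag j).2
  have h1 : 2 * A i j ^ 2 ∈ N := by
    have h := hN.1.2.1 _ (hN.1.2.1 _ (key 1 (by norm_num)) _ hNii) _ hNjj
    have e2 : A i j ^ 2 * A i i + 2 * A i j ^ 2 * 1 + A j j + -(A i j ^ 2 * A i i) + -(A j j)
        = 2 * A i j ^ 2 := by ring
    rwa [e2] at h
  have h2 : -(2 * A i j ^ 2) ∈ N := by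
    have h := hN.1.2.1 _ (hN.1.2.1 _ (key (-1) (by norm_num)) _ hNii) _ hNjj
    have e2 : A i j ^ 2 * A i i + 2 * A i j ^ 2 * (-1) + A j j + -(A i j ^ 2 * A i i) + -(A j j)
        = -(2 * A i j ^ 2) := by ring
    rwa [e2] at h
  have hsupp2 : (2:R) * A i j ^ 2 ∈ N ∩ (-N) := ⟨h1, by simpa using h2⟩
  rcases supp_prime hN hsupp2 with h | h
  · exact absurd h (two_not_supp hN)
  · exact h
end

section
variable {R : Type*} [CommRing R] {N : Set R} {n : ℕ}

lemma allsupp (hN : IsPrimeQMR N) (A : Matrix (Fin n) (Fin n) R) (hsym : A.IsSymm)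
    (hent : ∀ i j, A i j ∈ N ∩ (-N)) : (2:R)^2 • A ∈ Npow n N := by
  classical
  set e : Fin n → Fin n → R := fun i => Pi.single i 1 with he
  set T : Fin n × Fin n → Matrix (Fin n) (Fin n) R := fun p =>
    (2 * A p.1 p.2) • Matrix.of (fun k l => (e p.1 + e p.2) k * (e p.1 + e p.2) l)
    + ((-(2 * A p.1 p.2)) • Matrix.of (fun k l => e p.1 k * e p.1 l)
    + (-(2 * A p.1 p.2)) • Matrix.of (fun k l => e p.2 k * e p.2 l)) with hT
  have hTmem : ∀ p, T p ∈ Npow n N := by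
    intro p
    have hc1 : 2 * A p.1 p.2 ∈ N := by
      have := hN.1.2.1 _ (hent p.1 p.2).1 _ (hent p.1 p.2).1
      rwa [← two_mul] at this
    have hc2 : -(2 * A p.1 p.2) ∈ N := by
      have h' : -(A p.1 p.2) ∈ N := by simpa using (hent p.1 p.2).2
      have := hN.1.2.1 _ h' _ h'
      rw [show -(A p.1 p.2) + -(A p.1 p.2) = -(2 * A p.1 p.2) by ring] at this
      exact this
    exact Npow_add (Npow_outer hN.1 hc1 _)
      (Npow_add (Npow_outer hN.1 hc2 _) (Npow_outer hN.1 hc2 _))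
  have hrep : (2:R)^2 • A = ∑ p : Fin n × Fin n, T p := by
    ext k l
    rw [Matrix.sum_apply]
    have hterm : ∀ p : Fin n × Fin n, T p k l
        = 2 * A p.1 p.2 * (e p.1 k * e p.2 l) + 2 * A p.1 p.2 * (e p.2 k * e p.1 l) := by
      intro p
      simp only [hT, Matrix.add_apply, Matrix.smul_apply, Matrix.of_apply, Pi.add_apply,
        smul_eq_mul]
      ring
    rw [Finset.sum_congr rfl fun p _ => hterm p]
    rw [Finset.sum_add_distrib]
    have hs1 : ∑ p : Fin n × Fin n, 2 * A p.1 p.2 * (e p.1 k * e p.2 l) = 2 * A k l := by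
      rw [Fintype.sum_prod_type]
      simp [he, Pi.single_apply, Finset.sum_ite_eq, mul_ite, ite_mul]
    have hs2 : ∑ p : Fin n × Fin n, 2 * A p.1 p.2 * (e p.2 k * e p.1 l) = 2 * A l k := by
      rw [Fintype.sum_prod_type]
      simp [he, Pi.single_apply, Finset.sum_ite_eq, mul_ite, ite_mul]
    rw [hs1, hs2, hsym.apply k l]
    simp only [Matrix.smul_apply, smul_eq_mul]
    ring
  rw [hrep]
  exact Npow_sum _ _ fun p _ => hTmem p
end

section
variable {R : Type*} [CommRing R] {N : Set R}

lemma main_lemma (hN : IsPrimeQMR N) :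
    ∀ (n : ℕ) (A : Matrix (Fin n) (Fin n) R), A.IsSymm →
      (∀ v, v ⬝ᵥ A.mulVec v ∈ N) → ∃ t, t ∉ N ∩ (-N) ∧ t^2 • A ∈ Npow n N := by
  intro n
  induction n with
  | zero =>
    intro A _ _
    exact ⟨1, one_not_supp hN, ⟨0, Fin.elim0, Fin.elim0, fun i => i.elim0, by
      ext i j; exact i.elim0⟩⟩
  | succ m IH =>
    intro A hsym hind
    by_cases hd : ∃ j, A j j ∉ N ∩ (-N)
    · obtain ⟨j, hj⟩ := hd
      set σ := Equiv.swap (0 : Fin (m+1)) j with hσ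
      set A' := A.submatrix σ σ with hA'
      have hA'sym : A'.IsSymm := hsym.submatrix σ
      have hA'ind : ∀ v, v ⬝ᵥ A'.mulVec v ∈ N := by
        intro v
        have h1 : A'.mulVec v = (A.mulVec (v ∘ σ.symm)) ∘ σ :=
          Matrix.submatrix_mulVec_equiv A v σ σ
        have h2 : v ⬝ᵥ ((A.mulVec (v ∘ σ.symm)) ∘ σ)
            = (v ∘ σ.symm) ⬝ᵥ (A.mulVec (v ∘ σ.symm)) := by
          rw [dotProduct, dotProduct]
          exact Fintype.sum_equiv σ _ _ fun i => by simp
        rw [h1, h2]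
        exact hind _
      have hA'00 : A' 0 0 = A j j := by
        rw [hA']
        simp [Matrix.submatrix_apply, hσ, Equiv.swap_apply_left]
      obtain ⟨t, ht, htA'⟩ := pivot hN IH A' hA'sym hA'ind (by rwa [hA'00])
      refine ⟨t, ht, ?_⟩
      have hback : (t^2 • A').submatrix σ σ = t^2 • A := by
        ext i j
        simp only [Matrix.submatrix_apply, Matrix.smul_apply, hA']
        rw [hσ]
        rw [Equiv.swap_apply_self, Equiv.swap_apply_self]
      rw [← hback]
      exact Npow_submatrix σ htA'
    · push_neg at hd
      refine ⟨2, two_not_supp hN, ?_⟩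
      exact allsupp hN A hsym (entries_supp hN A hsym hind hd)
end


theorem stmt14 {n : ℕ} [NeZero n] {R : Type*} [CommRing R] (N : Set R) (hN : IsPrimeQMR N) :
    indN n N = {A : Matrix (Fin n) (Fin n) R | A.IsSymm ∧
      ∃ t : R, t ∉ N ∩ (-N) ∧ t ^ 2 • A ∈ Npow n N} := by
  ext A
  constructor
  · rintro ⟨hsym, hind⟩
    exact ⟨hsym, main_lemma hN n A hsym hind⟩
  · rintro ⟨hsym, t, ht, k, c, B, hc, hrep⟩
    refine ⟨hsym, fun v => ?_⟩
    have hq : (v ⬝ᵥ A.mulVec v) * t^2 ∈ N := by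
      have h1 : v ⬝ᵥ (t^2 • A).mulVec v = (v ⬝ᵥ A.mulVec v) * t^2 := by
        rw [smul_mulVec, dotProduct_smul, smul_eq_mul]; ring
      rw [← h1, hrep]
      have h2 : v ⬝ᵥ (∑ i, c i • ((B i)ᵀ * B i)).mulVec v
          = ∑ i, c i * ((B i).mulVec v ⬝ᵥ (B i).mulVec v) := by
        have hs : (∑ i, c i • ((B i)ᵀ * B i)) *ᵥ v = ∑ i, (c i • ((B i)ᵀ * B i)) *ᵥ v := by
          ext l
          simp only [Matrix.mulVec, dotProduct, Matrix.sum_apply, Finset.sum_mul,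
            Finset.sum_apply]
          exact Finset.sum_comm
        have hds : v ⬝ᵥ ∑ i : Fin k, (c i • ((B i)ᵀ * B i)) *ᵥ v
            = ∑ i : Fin k, v ⬝ᵥ ((c i • ((B i)ᵀ * B i)) *ᵥ v) := by
          simp only [dotProduct, Finset.sum_apply, Finset.mul_sum]
          exact Finset.sum_comm
        rw [hs, hds]
        refine Finset.sum_congr rfl fun i _ => ?_
        rw [smul_mulVec, dotProduct_smul, smul_eq_mul, ← Matrix.mulVec_mulVec,
          Matrix.dotProduct_mulVec, Matrix.vecMul_transpose]
      rw [h2]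
      refine qm_sum hN.1 _ _ fun i _ => ?_
      rw [dotProduct]
      rw [Finset.mul_sum]
      refine qm_sum hN.1 _ _ fun l _ => ?_
      have : c i * ((B i).mulVec v l * (B i).mulVec v l) = ((B i).mulVec v l)^2 * c i := by ring
      rw [this]
      exact qm_sq_smul hN.1 _ (hc i)
    rcases hN.2.2 _ t hq with h | h
    · exact h
    · exact absurd h ht
end

section
/- For every real closed field κ and every ring homomorphism φ : R → κ, the set of symmetric n×n matrices A over R such that φ applied entrywise to A gives a positive semidefinite matrix over κ equals ind(φ⁻¹(Σκ²)), i.e., equals {A symmetric : v^T A v ∈ φ⁻¹(κ²) for all v ∈ R^n}, where κ² denotes the (unique) ordering of κ consisting of squares. -/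
open Matrix Polynomial

/-- A real closed field: a linear ordered field in which every nonnegative element
is a square and every polynomial of odd degree has a root. -/
def IsRealClosedField (κ : Type*) [Field κ] [LinearOrder κ] [IsStrictOrderedRing κ] : Prop :=
  (∀ x : κ, 0 ≤ x → ∃ y : κ, x = y ^ 2) ∧
  ∀ p : Polynomial κ, Odd p.natDegree → ∃ x : κ, p.eval x = 0

/-- A ring hom commutes with evaluation of the quadratic form of a matrix. -/
lemma map_quadratic {n : ℕ} {R κ : Type*} [CommRing R] [CommRing κ] (φ : R →+* κ)
    (A : Matrix (Fin n) (Fin n) R) (v : Fin n → R) :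
    φ (v ⬝ᵥ A.mulVec v) = (φ ∘ v) ⬝ᵥ (A.map φ).mulVec (φ ∘ v) := by
  simp [dotProduct, Matrix.mulVec, map_sum, _root_.map_mul, Matrix.map_apply,
    Function.comp]

/-- Evaluating the quadratic form of a congruence `Mᵀ D M` with `D` diagonal. -/
lemma quadratic_conj {m n : ℕ} {K : Type*} [CommRing K]
    (M : Matrix (Fin m) (Fin n) K) (d : Fin m → K) (x : Fin n → K) :
    x ⬝ᵥ (Mᵀ * Matrix.diagonal d * M).mulVec x
      = ∑ i, d i * (M.mulVec x i * M.mulVec x i) := by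
  rw [← Matrix.mulVec_mulVec, ← Matrix.mulVec_mulVec, Matrix.dotProduct_mulVec,
    Matrix.vecMul_transpose]
  simp only [dotProduct, Matrix.mulVec_diagonal]
  exact Finset.sum_congr rfl fun i _ => by ring

/-- Symmetric matrices over a linear ordered field with equal quadratic forms
are equal. -/
lemma symm_ext {n : ℕ} {K : Type*} [Field K] [LinearOrder K] [IsStrictOrderedRing K]
    {B C : Matrix (Fin n) (Fin n) K} (hB : B.IsSymm) (hC : C.IsSymm)
    (h : ∀ x : Fin n → K, x ⬝ᵥ B.mulVec x = x ⬝ᵥ C.mulVec x) : B = C := by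
  have key : ∀ (M : Matrix (Fin n) (Fin n) K) (i j : Fin n),
      (Pi.single i (1:K)) ⬝ᵥ M.mulVec (Pi.single j 1) = M i j := by
    intro M i j
    rw [Matrix.mulVec_single, single_dotProduct]
    simp
  ext i j
  rcases eq_or_ne i j with rfl | hij
  · have := h (Pi.single i 1)
    rwa [key, key] at this
  · have hd₁ := h (Pi.single i 1); rw [key, key] at hd₁
    have hd₂ := h (Pi.single j 1); rw [key, key] at hd₂
    have hs := h (Pi.single i 1 + Pi.single j 1)
    simp only [add_dotProduct, Matrix.mulVec_add, dotProduct_add, key] at hs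
    have hBij : B j i = B i j := by
      have := congrFun (congrFun hB i) j; simpa [Matrix.transpose_apply] using this
    have hCij : C j i = C i j := by
      have := congrFun (congrFun hC i) j; simpa [Matrix.transpose_apply] using this
    have h2 : (2:K) * B i j = 2 * C i j := by
      rw [hBij, hCij] at hs; linarith
    exact mul_left_cancel₀ (two_ne_zero) h2

/-- Every PSD symmetric matrix over a linear ordered field admits a congruence
decomposition `B = Mᵀ D M` with `D` diagonal with nonnegative entries. -/
lemma psd_decomp {n : ℕ} {K : Type*} [Field K] [LinearOrder K] [IsStrictOrderedRing K]
    (B : Matrix (Fin n) (Fin n) K) (hB : B.IsSymm)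
    (hpos : ∀ x : Fin n → K, 0 ≤ x ⬝ᵥ B.mulVec x) :
    ∃ (m : ℕ) (d : Fin m → K) (M : Matrix (Fin m) (Fin n) K),
      (∀ i, 0 ≤ d i) ∧ B = Mᵀ * Matrix.diagonal d * M := by
  letI : Invertible (2 : K) := invertibleOfNonzero two_ne_zero
  set Q : QuadraticForm K (Fin n → K) := B.toQuadraticMap' with hQdef
  have hQ : ∀ x, Q x = x ⬝ᵥ B.mulVec x := fun x => Matrix.toLinearMap₂'_apply' B x x
  obtain ⟨w, ⟨iso⟩⟩ := Q.equivalent_weightedSumSquares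
  set M : Matrix (Fin (Module.finrank K (Fin n → K))) (Fin n) K :=
    LinearMap.toMatrix' iso.toLinearEquiv.toLinearMap with hMdef
  have hM : ∀ x, M.mulVec x = iso x := by
    intro x
    rw [hMdef, ← Matrix.toLin'_apply, Matrix.toLin'_toMatrix']
    rfl
  have hwss : ∀ y : Fin (Module.finrank K (Fin n → K)) → K,
      QuadraticMap.weightedSumSquares K w y = ∑ i, w i * (y i * y i) := by
    intro y
    rw [QuadraticMap.weightedSumSquares_apply]
    exact Finset.sum_congr rfl fun i _ => by rw [smul_eq_mul]
  have hwnn : ∀ i, 0 ≤ w i := by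
    intro i
    set y : Fin (Module.finrank K (Fin n → K)) → K := Pi.single i 1 with hydef
    have h3 : QuadraticMap.weightedSumSquares K w y = Q (iso.toLinearEquiv.symm y) := by
      conv_lhs => rw [← iso.toLinearEquiv.apply_symm_apply y]
      exact iso.map_app _
    have h4 : QuadraticMap.weightedSumSquares K w y = w i := by
      rw [hwss, hydef, Finset.sum_eq_single i]
      · simp
      · intro j _ hj; simp [Pi.single_apply, hj]
      · simp
    rw [← h4, h3, hQ]
    exact hpos _
  refine ⟨_, w, M, hwnn, symm_ext hB ?_ ?_⟩
  · show (Mᵀ * Matrix.diagonal w * M)ᵀ = Mᵀ * Matrix.diagonal w * M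
    simp [Matrix.transpose_mul, Matrix.mul_assoc]
  · intro x
    rw [quadratic_conj, hM, ← hQ, ← iso.map_app x, hwss]

theorem stmt15 {n : ℕ} [NeZero n] {R : Type*} [CommRing R]
    (κ : Type*) [Field κ] [LinearOrder κ] [IsStrictOrderedRing κ] (hκ : IsRealClosedField κ) (φ : R →+* κ) :
    {A : Matrix (Fin n) (Fin n) R | A.IsSymm ∧
        ∀ w : Fin n → κ, 0 ≤ w ⬝ᵥ (A.map φ).mulVec w} =
      {A : Matrix (Fin n) (Fin n) R | A.IsSymm ∧
        ∀ v : Fin n → R, φ (v ⬝ᵥ A.mulVec v) ∈ {x : κ | ∃ y : κ, x = y ^ 2}} := by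
  ext A
  simp only [Set.mem_setOf_eq]
  refine and_congr_right fun hsymm => ⟨fun h v => ?_, fun h w => ?_⟩
  · -- forward direction
    refine hκ.1 _ ?_
    rw [map_quadratic]
    exact h (φ ∘ v)
  · -- backward direction
    set S : Subfield κ := Subfield.closure (Set.range (φ : R → κ)) with hS
    have hmem : ∀ i j, φ (A i j) ∈ S := fun i j => Subfield.subset_closure ⟨A i j, rfl⟩
    set B' : Matrix (Fin n) (Fin n) S := Matrix.of (fun i j => (⟨φ (A i j), hmem i j⟩ : S))
      with hB'def
    have hmap : B'.map (SubringClass.subtype S) = A.map φ := by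
      ext i j; rfl
    have hB'symm : B'.IsSymm := by
      ext i j
      have hA : A j i = A i j := congrFun (congrFun hsymm i) j
      show φ (A j i) = φ (A i j)
      rw [hA]
    have hclos : Subring.closure (Set.range (φ : R → κ)) = φ.range := by
      rw [← RingHom.coe_range]; exact Subring.closure_eq _
    -- the quadratic form of B' is nonnegative on S^n
    have hpos' : ∀ x : Fin n → S, 0 ≤ x ⬝ᵥ B'.mulVec x := by
      intro x
      have hrep : ∀ i : Fin n, ∃ a b : R, φ b ≠ 0 ∧ (x i : κ) = φ a / φ b := by
        intro i
        have hx : (x i : κ) ∈ Subfield.closure (Set.range (φ : R → κ)) := (x i).2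
        rw [Subfield.mem_closure_iff] at hx
        obtain ⟨y, hy, z, hz, hyz⟩ := hx
        rw [hclos, RingHom.mem_range] at hy hz
        obtain ⟨a, rfl⟩ := hy
        obtain ⟨b, rfl⟩ := hz
        rcases eq_or_ne (φ b) 0 with hb | hb
        · refine ⟨0, 1, by simp, ?_⟩
          rw [← hyz, hb]; simp
        · exact ⟨a, b, hb, hyz.symm⟩
      choose a b hb hx using hrep
      set c : R := ∏ i, b i with hc
      have hφc : φ c ≠ 0 := by
        rw [hc, map_prod]
        exact Finset.prod_ne_zero_iff.mpr fun i _ => hb i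
      set v : Fin n → R := fun i => a i * ∏ j ∈ Finset.univ.erase i, b j with hv
      have hφv : ∀ i, φ (v i) = φ c * (x i : κ) := by
        intro i
        have hsplit : φ c = φ (b i) * ∏ j ∈ Finset.univ.erase i, φ (b j) := by
          rw [hc, map_prod, ← Finset.mul_prod_erase Finset.univ _ (Finset.mem_univ i)]
        have hvi : φ (v i) = φ (a i) * ∏ j ∈ Finset.univ.erase i, φ (b j) := by
          simp only [hv, _root_.map_mul, map_prod]
        rw [hvi, hx i, hsplit]
        field_simp [hb i]
      have hqv : φ (v ⬝ᵥ A.mulVec v)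
          = (φ c * φ c) * ((fun i => (x i : κ)) ⬝ᵥ (A.map φ).mulVec (fun i => (x i : κ))) := by
        rw [map_quadratic]
        have hcv : (φ ∘ v) = (φ c) • (fun i => (x i : κ)) := by
          funext i; simp [hφv i, smul_eq_mul]
        rw [hcv, smul_dotProduct, Matrix.mulVec_smul, dotProduct_smul,
          smul_eq_mul, smul_eq_mul]
        ring
      obtain ⟨y, hy⟩ := h v
      have hnn : 0 ≤ φ (v ⬝ᵥ A.mulVec v) := by rw [hy]; positivity
      rw [hqv] at hnn
      have hc2 : 0 < φ c * φ c := by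
        rcases hφc.lt_or_gt with h' | h'
        · exact mul_pos_of_neg_of_neg h' h'
        · exact mul_pos h' h'
      have hxq : 0 ≤ (fun i => (x i : κ)) ⬝ᵥ (A.map φ).mulVec (fun i => (x i : κ)) := by
        by_contra hneg
        push_neg at hneg
        nlinarith
      have hcoe : ((x ⬝ᵥ B'.mulVec x : S) : κ)
          = (fun i => (x i : κ)) ⬝ᵥ (A.map φ).mulVec (fun i => (x i : κ)) := by
        have hmq := map_quadratic (SubringClass.subtype S) B' x
        rw [hmap] at hmq
        exact hmq
      have hfin : (0 : κ) ≤ ((x ⬝ᵥ B'.mulVec x : S) : κ) := by rw [hcoe]; exact hxq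
      exact_mod_cast hfin
    obtain ⟨m, d, M, hd, hBM⟩ := psd_decomp B' hB'symm hpos'
    have hBκ : A.map φ = (M.map (SubringClass.subtype S))ᵀ
        * Matrix.diagonal (fun i => (d i : κ)) * (M.map (SubringClass.subtype S)) := by
      rw [← hmap, hBM, Matrix.map_mul, Matrix.map_mul, Matrix.transpose_map,
        Matrix.diagonal_map (map_zero _)]
      rfl
    rw [hBκ, quadratic_conj]
    refine Finset.sum_nonneg fun i _ => mul_nonneg ?_ (mul_self_nonneg _)
    exact_mod_cast hd i
end

section
/- Let R = ℝ[x], S = {x³·I_2} and F = diag(x, 1) ∈ M_2(ℝ[x]). Although F(x) is positive semidefinite for all x ≥ 0, there is no central element b ∈ T_S (the preordering of ℝ[x] generated by x³) and no k ∈ ℕ and C ∈ T_S^2 such that F·b = F^{2k} + C. -/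
open Matrix Polynomial

/-- A preordering in `M_n(R)`: a quadratic module whose intersection with the
center `R·I_n` is closed under multiplication. -/
def IsPre {n : ℕ} {R : Type*} [CommRing R] (M : Set (Matrix (Fin n) (Fin n) R)) : Prop :=
  IsQM M ∧ ∀ r s : R, r • (1 : Matrix (Fin n) (Fin n) R) ∈ M →
    s • (1 : Matrix (Fin n) (Fin n) R) ∈ M → (r * s) • (1 : Matrix (Fin n) (Fin n) R) ∈ M

/-- The smallest preordering of `M_n(R)` containing `S`. -/
def TSgen {n : ℕ} {R : Type*} [CommRing R] (S : Set (Matrix (Fin n) (Fin n) R)) :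
    Set (Matrix (Fin n) (Fin n) R) :=
  ⋂₀ {T | IsPre T ∧ S ⊆ T}

/-- Sums of squares in `ℝ[x]`. -/
def sumSq : Set (Polynomial ℝ) :=
  (AddSubmonoid.closure {p : Polynomial ℝ | ∃ q : Polynomial ℝ, p = q ^ 2} :
    AddSubmonoid (Polynomial ℝ))

/-- The preordering of `ℝ[x]` generated by `x³`: `{u + x³ v : u, v sums of squares}`. -/
def TSx : Set (Polynomial ℝ) :=
  {p | ∃ u ∈ sumSq, ∃ v ∈ sumSq, p = u + (Polynomial.X : Polynomial ℝ) ^ 3 * v}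

/-- The matrix `F = diag(x, 1)` over `ℝ[x]`. -/
noncomputable def Fmat : Matrix (Fin 2) (Fin 2) (Polynomial ℝ) :=
  Matrix.diagonal ![Polynomial.X, 1]

/-! ### Auxiliary lemmas on sums of squares and `TSx` -/

lemma sq_mem_sumSq (q : Polynomial ℝ) : q ^ 2 ∈ sumSq :=
  AddSubmonoid.subset_closure ⟨q, rfl⟩

lemma zero_mem_sumSq : (0 : Polynomial ℝ) ∈ sumSq := by
  simp only [sumSq, SetLike.mem_coe]; exact zero_mem _

lemma add_mem_sumSq {a b : Polynomial ℝ} (ha : a ∈ sumSq) (hb : b ∈ sumSq) :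
    a + b ∈ sumSq := by
  simp only [sumSq, SetLike.mem_coe] at *; exact add_mem ha hb

lemma mul_mem_sumSq {a b : Polynomial ℝ} (ha : a ∈ sumSq) (hb : b ∈ sumSq) :
    a * b ∈ sumSq := by
  simp only [sumSq, SetLike.mem_coe] at *
  induction ha using AddSubmonoid.closure_induction with
  | mem x hx =>
    obtain ⟨q, rfl⟩ := hx
    induction hb using AddSubmonoid.closure_induction with
    | mem y hy =>
      obtain ⟨r, rfl⟩ := hy
      exact AddSubmonoid.subset_closure ⟨q * r, by ring⟩
    | zero => simpa using zero_mem _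
    | add y z hy hz py pz => rw [mul_add]; exact add_mem py pz
  | zero => simpa using zero_mem _
  | add x y hx hy px py => rw [add_mul]; exact add_mem px py

lemma sumSq_eval_nonneg {u : Polynomial ℝ} (hu : u ∈ sumSq) (t : ℝ) :
    0 ≤ u.eval t := by
  simp only [sumSq, SetLike.mem_coe] at hu
  induction hu using AddSubmonoid.closure_induction with
  | mem x hx => obtain ⟨q, rfl⟩ := hx; rw [eval_pow]; positivity
  | zero => simp
  | add x y hx hy px py => simp only [eval_add]; linarith

lemma sumSq_factor {u : Polynomial ℝ} (hu : u ∈ sumSq) (h0 : u.eval 0 = 0) :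
    ∃ w ∈ sumSq, u = Polynomial.X ^ 2 * w := by
  simp only [sumSq, SetLike.mem_coe] at hu
  induction hu using AddSubmonoid.closure_induction with
  | mem x hx =>
    obtain ⟨q, rfl⟩ := hx
    have hq0 : q.eval 0 = 0 := by
      have := h0; rw [eval_pow] at this; nlinarith [sq_nonneg (q.eval 0)]
    have : (X : Polynomial ℝ) ∣ q := by
      rw [Polynomial.X_dvd_iff, Polynomial.coeff_zero_eq_eval_zero]; exact hq0
    obtain ⟨r, rfl⟩ := this
    exact ⟨r ^ 2, sq_mem_sumSq r, by ring⟩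
  | zero => exact ⟨0, zero_mem_sumSq, by simp⟩
  | add x y hx hy px py =>
    have hxn := sumSq_eval_nonneg (by simpa [sumSq] using hx) 0
    have hyn := sumSq_eval_nonneg (by simpa [sumSq] using hy) 0
    rw [eval_add] at h0
    have hx0 : x.eval 0 = 0 := by linarith
    have hy0 : y.eval 0 = 0 := by linarith
    obtain ⟨w1, hw1, rfl⟩ := px hx0
    obtain ⟨w2, hw2, rfl⟩ := py hy0
    exact ⟨w1 + w2, add_mem_sumSq hw1 hw2, by ring⟩

lemma sumSq_mem_TSx {u : Polynomial ℝ} (h : u ∈ sumSq) : u ∈ TSx :=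
  ⟨u, h, 0, zero_mem_sumSq, by ring⟩

lemma add_mem_TSx {a b : Polynomial ℝ} (ha : a ∈ TSx) (hb : b ∈ TSx) : a + b ∈ TSx := by
  obtain ⟨u1, hu1, v1, hv1, rfl⟩ := ha
  obtain ⟨u2, hu2, v2, hv2, rfl⟩ := hb
  exact ⟨u1 + u2, add_mem_sumSq hu1 hu2, v1 + v2, add_mem_sumSq hv1 hv2, by ring⟩

lemma mul_mem_TSx {a b : Polynomial ℝ} (ha : a ∈ TSx) (hb : b ∈ TSx) : a * b ∈ TSx := by
  obtain ⟨u1, hu1, v1, hv1, rfl⟩ := ha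
  obtain ⟨u2, hu2, v2, hv2, rfl⟩ := hb
  refine ⟨u1 * u2 + (X ^ 3) ^ 2 * (v1 * v2),
    add_mem_sumSq (mul_mem_sumSq hu1 hu2)
      (mul_mem_sumSq (sq_mem_sumSq (X ^ 3)) (mul_mem_sumSq hv1 hv2)),
    u1 * v2 + v1 * u2,
    add_mem_sumSq (mul_mem_sumSq hu1 hv2) (mul_mem_sumSq hv1 hu2), by ring⟩

/-! ### The auxiliary preordering of matrices whose quadratic forms land in `TSx` -/

def Tset : Set (Matrix (Fin 2) (Fin 2) (Polynomial ℝ)) :=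
  {C | C.IsSymm ∧ ∀ v : Fin 2 → Polynomial ℝ, v ⬝ᵥ C.mulVec v ∈ TSx}

lemma dot_self_mem_sumSq (v : Fin 2 → Polynomial ℝ) : v ⬝ᵥ v ∈ sumSq := by
  have : v ⬝ᵥ v = v 0 ^ 2 + v 1 ^ 2 := by
    simp [dotProduct, Fin.sum_univ_two]; ring
  rw [this]
  exact add_mem_sumSq (sq_mem_sumSq _) (sq_mem_sumSq _)

lemma smul_one_form (r : Polynomial ℝ) (v : Fin 2 → Polynomial ℝ) :
    v ⬝ᵥ (r • (1 : Matrix (Fin 2) (Fin 2) (Polynomial ℝ))).mulVec v = r * (v ⬝ᵥ v) := by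
  simp [Matrix.mulVec, dotProduct, Fin.sum_univ_two, Matrix.one_apply, Matrix.smul_apply]
  ring

lemma mem_TSx_of_smul_one_mem {r : Polynomial ℝ}
    (h : r • (1 : Matrix (Fin 2) (Fin 2) (Polynomial ℝ)) ∈ Tset) : r ∈ TSx := by
  have := h.2 ![1, 0]
  rw [smul_one_form] at this
  simpa [dotProduct, Fin.sum_univ_two] using this

lemma conj_form (A m : Matrix (Fin 2) (Fin 2) (Polynomial ℝ)) (v : Fin 2 → Polynomial ℝ) :
    v ⬝ᵥ (Aᵀ * m * A).mulVec v = (A.mulVec v) ⬝ᵥ m.mulVec (A.mulVec v) := by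
  simp [Matrix.mulVec, dotProduct, Matrix.mul_apply, Matrix.transpose_apply,
    Fin.sum_univ_two]
  ring

lemma Tset_isPre : IsPre Tset := by
  constructor
  · refine ⟨fun A hA => hA.1, ⟨Matrix.isSymm_one, fun v => ?_⟩, ?_, ?_⟩
    · have : v ⬝ᵥ (1 : Matrix (Fin 2) (Fin 2) (Polynomial ℝ)).mulVec v = v ⬝ᵥ v := by
        simp
      rw [this]; exact sumSq_mem_TSx (dot_self_mem_sumSq v)
    · rintro a ⟨has, haf⟩ b ⟨hbs, hbf⟩
      refine ⟨has.add hbs, fun v => ?_⟩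
      rw [Matrix.add_mulVec, dotProduct_add]
      exact add_mem_TSx (haf v) (hbf v)
    · rintro A m ⟨hms, hmf⟩
      refine ⟨?_, fun v => ?_⟩
      · unfold Matrix.IsSymm
        rw [Matrix.transpose_mul, Matrix.transpose_mul, Matrix.transpose_transpose, hms.eq,
          Matrix.mul_assoc]
      · rw [conj_form]; exact hmf (A.mulVec v)
  · intro r s hr hs
    refine ⟨?_, fun v => ?_⟩
    · unfold Matrix.IsSymm
      rw [Matrix.transpose_smul, Matrix.transpose_one]
    · rw [smul_one_form]
      exact mul_mem_TSx (mul_mem_TSx (mem_TSx_of_smul_one_mem hr) (mem_TSx_of_smul_one_mem hs))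
        (sumSq_mem_TSx (dot_self_mem_sumSq v))

lemma gen_sub_Tset :
    ({(Polynomial.X : Polynomial ℝ) ^ 3 • (1 : Matrix (Fin 2) (Fin 2) (Polynomial ℝ))} :
      Set (Matrix (Fin 2) (Fin 2) (Polynomial ℝ))) ⊆ Tset := by
  rintro _ rfl
  refine ⟨?_, fun v => ?_⟩
  · unfold Matrix.IsSymm
    rw [Matrix.transpose_smul, Matrix.transpose_one]
  · rw [smul_one_form]
    exact ⟨0, zero_mem_sumSq, v ⬝ᵥ v, dot_self_mem_sumSq v, by ring⟩

lemma entry00 {C : Matrix (Fin 2) (Fin 2) (Polynomial ℝ)} (hC : C ∈ Tset) : C 0 0 ∈ TSx := by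
  have := hC.2 ![1, 0]
  simpa [Matrix.mulVec, dotProduct, Fin.sum_univ_two] using this

lemma entry11 {C : Matrix (Fin 2) (Fin 2) (Polynomial ℝ)} (hC : C ∈ Tset) : C 1 1 ∈ TSx := by
  have := hC.2 ![0, 1]
  simpa [Matrix.mulVec, dotProduct, Fin.sum_univ_two] using this

lemma Fpow_00 (n : ℕ) : (Fmat ^ n) 0 0 = (X : Polynomial ℝ) ^ n := by
  rw [Fmat, Matrix.diagonal_pow, Matrix.diagonal_apply_eq]
  simp [Pi.pow_apply]

lemma Fpow_11 (n : ℕ) : (Fmat ^ n) 1 1 = 1 := by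
  rw [Fmat, Matrix.diagonal_pow, Matrix.diagonal_apply_eq]
  simp [Pi.pow_apply]

/-- The scalar contradiction: there is no `b ∈ TSx` with
`b - 1 ∈ TSx` and `b·x - x^{2k} ∈ TSx`. -/
lemma scalar_contradiction (b : Polynomial ℝ) (k : ℕ)
    (h1 : b - 1 ∈ TSx) (h2 : b * X - X ^ (2 * k) ∈ TSx) : False := by
  obtain ⟨u1, hu1, v1, hv1, he1⟩ := h1
  obtain ⟨u2, hu2, v2, hv2, he2⟩ := h2
  have hb0 : (1 : ℝ) ≤ b.eval 0 := by
    have := congrArg (Polynomial.eval 0) he1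
    simp at this
    have := sumSq_eval_nonneg hu1 0
    linarith
  have he20 := congrArg (Polynomial.eval 0) he2
  simp at he20
  rcases Nat.eq_zero_or_pos k with hk | hk
  · subst hk
    simp at he20
    have := sumSq_eval_nonneg hu2 0
    linarith
  · have hne : 2 * k ≠ 0 := by omega
    rw [zero_pow hne] at he20
    have hu20 : u2.eval 0 = 0 := by
      have := sumSq_eval_nonneg hu2 0
      linarith
    obtain ⟨w, hw, rfl⟩ := sumSq_factor hu2 hu20
    have hc := congrArg (fun p => Polynomial.coeff p 1) he2
    simp only [Polynomial.coeff_sub, Polynomial.coeff_add] at hc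
    rw [Polynomial.coeff_mul_X, Polynomial.coeff_X_pow] at hc
    rw [mul_comm ((X : Polynomial ℝ) ^ 2) w, mul_comm ((X : Polynomial ℝ) ^ 3) v2] at hc
    rw [Polynomial.coeff_mul_X_pow', Polynomial.coeff_mul_X_pow'] at hc
    have h2k : ¬ (1 = 2 * k) := by omega
    simp [h2k] at hc
    rw [Polynomial.coeff_zero_eq_eval_zero] at hc
    linarith

theorem stmt18 :
    (∀ t : ℝ, 0 ≤ t → ∀ w : Fin 2 → ℝ, 0 ≤ w ⬝ᵥ (Fmat.map (Polynomial.eval t)).mulVec w) ∧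
      ¬ ∃ b ∈ TSx, ∃ k : ℕ,
        ∃ C ∈ TSgen {(Polynomial.X : Polynomial ℝ) ^ 3 •
          (1 : Matrix (Fin 2) (Fin 2) (Polynomial ℝ))},
          b • Fmat = Fmat ^ (2 * k) + C := by
  constructor
  · intro t ht w
    have : w ⬝ᵥ (Fmat.map (Polynomial.eval t)).mulVec w = t * (w 0 * w 0) + w 1 * w 1 := by
      simp [Fmat, Matrix.mulVec, dotProduct, Fin.sum_univ_two, Matrix.map_apply,
        Matrix.diagonal, Matrix.of_apply]
      ring
    rw [this]
    nlinarith [sq_nonneg (w 0), sq_nonneg (w 1)]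
  · rintro ⟨b, hb, k, C, hC, heq⟩
    have hCT : C ∈ Tset := hC Tset ⟨Tset_isPre, gen_sub_Tset⟩
    have h00 := congrFun (congrFun heq 0) 0
    have h11 := congrFun (congrFun heq 1) 1
    have hF00 : Fmat 0 0 = (X : Polynomial ℝ) := by
      rw [Fmat, Matrix.diagonal_apply_eq]; rfl
    have hF11 : Fmat 1 1 = (1 : Polynomial ℝ) := by
      rw [Fmat, Matrix.diagonal_apply_eq]; rfl
    rw [Matrix.smul_apply, Matrix.add_apply, Fpow_00, hF00, smul_eq_mul] at h00
    rw [Matrix.smul_apply, Matrix.add_apply, Fpow_11, hF11, smul_eq_mul] at h11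
    have hC00 : C 0 0 = b * X - X ^ (2 * k) := by linear_combination -h00
    have hC11 : C 1 1 = b - 1 := by linear_combination -h11
    exact scalar_contradiction b k (hC11 ▸ entry11 hCT) (hC00 ▸ entry00 hCT)
end
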